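/- For every k₀ ∈ ℕ there exists a set N ⊆ [-2^{k₀}, 2^{k₀}] ∩ ℤ with |N| ≲ 2^{k₀}/k₀ such that the union over n ∈ N of the sets {2^k + n : 0 ≤ k < k₀} covers at least half of [1, 2^{k₀}] ∩ ℕ, i.e. |⋃_{n∈N} {2^k+n : 0 ≤ k < k₀} ∩ [1,2^{k₀}]| ≥ 2^{k₀}/2. -/

import Mathlib

open scoped Classical


lemma cardI (k₀ : ℕ) : (Finset.Icc (-(2^k₀):ℤ) (2^k₀)).card = 2*2^k₀+1 := by
  have h : ((2^k₀ : ℕ) : ℤ) = (2:ℤ)^k₀ := by push_cast; ring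
  rw [Int.card_Icc, ← h]
  omega

lemma avg (k₀ : ℕ) (hk : 1 ≤ k₀) (A : Finset ℕ) (hA : A ⊆ Finset.Icc 1 (2^k₀)) :
    ∃ n ∈ Finset.Icc (-(2^k₀):ℤ) (2^k₀),
      k₀ * A.card ≤ (2*2^k₀+1) * (A.filter (fun s : ℕ => ∃ k < k₀, (s:ℤ) = 2^k + n)).card := by
  set I : Finset ℤ := Finset.Icc (-(2^k₀):ℤ) (2^k₀) with hI
  have hIcard : I.card = 2*2^k₀+1 := cardI k₀
  have key : ∀ s ∈ A, (k₀ : ℕ) ≤ (I.filter (fun n : ℤ => ∃ k < k₀, (s:ℤ) = 2^k + n)).card := by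
    intro s hs
    have hs' := Finset.mem_Icc.mp (hA hs)
    have hsub : (Finset.range k₀).image (fun k => (s:ℤ) - 2^k) ⊆
        I.filter (fun n : ℤ => ∃ k < k₀, (s:ℤ) = 2^k + n) := by
      intro n hn
      simp only [Finset.mem_image, Finset.mem_range] at hn
      obtain ⟨k, hk', rfl⟩ := hn
      have h1 : (1:ℤ) ≤ s := by exact_mod_cast hs'.1
      have h2 : (s:ℤ) ≤ 2^k₀ := by exact_mod_cast hs'.2
      have h3 : (2:ℤ)^k ≤ 2^k₀ := pow_le_pow_right₀ (by norm_num) (le_of_lt hk')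
      have h4 : (1:ℤ) ≤ 2^k := by exact_mod_cast Nat.one_le_two_pow
      refine Finset.mem_filter.mpr ⟨Finset.mem_Icc.mpr ⟨by linarith, by linarith⟩, ⟨k, hk', by ring⟩⟩
    calc (k₀:ℕ) = ((Finset.range k₀).image (fun k => (s:ℤ) - 2^k)).card := by
          rw [Finset.card_image_of_injective _ (by
            intro a b hab
            simp only [sub_right_inj] at hab
            exact Nat.pow_right_injective (le_refl 2) (by exact_mod_cast hab)), Finset.card_range]
      _ ≤ _ := Finset.card_le_card hsub
  have swap : ∑ n ∈ I, (A.filter (fun s : ℕ => ∃ k < k₀, (s:ℤ) = 2^k + n)).card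
      = ∑ s ∈ A, (I.filter (fun n : ℤ => ∃ k < k₀, (s:ℤ) = 2^k + n)).card := by
    simp only [Finset.card_filter]
    exact Finset.sum_comm
  have hsum : I.card * (k₀ * A.card) ≤
      ∑ n ∈ I, I.card * (A.filter (fun s : ℕ => ∃ k < k₀, (s:ℤ) = 2^k + n)).card := by
    rw [← Finset.mul_sum, swap]
    have : k₀ * A.card ≤ ∑ s ∈ A, (I.filter (fun n : ℤ => ∃ k < k₀, (s:ℤ) = 2^k + n)).card := by
      calc k₀ * A.card = ∑ _s ∈ A, k₀ := by rw [Finset.sum_const, mul_comm]; rfl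
        _ ≤ _ := Finset.sum_le_sum key
    exact Nat.mul_le_mul_left _ this
  have hne : I.Nonempty := ⟨0, by simp [hI, Finset.mem_Icc]⟩
  obtain ⟨n, hn, hle⟩ := Finset.exists_le_of_sum_le (f := fun _ => k₀ * A.card)
    (g := fun n => I.card * (A.filter (fun s : ℕ => ∃ k < k₀, (s:ℤ) = 2^k + n)).card) hne
    (by rw [Finset.sum_const, smul_eq_mul]; exact hsum)
  exact ⟨n, hn, by rwa [hIcard] at hle⟩

noncomputable def greedy (k₀ : ℕ) (hk : 1 ≤ k₀) : ℕ → Finset ℤ × Finset ℕ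
  | 0 => (∅, Finset.Icc 1 (2^k₀))
  | (i+1) =>
    let p := greedy k₀ hk i
    let n := Classical.choose (avg k₀ hk (p.2 ∩ Finset.Icc 1 (2^k₀)) Finset.inter_subset_right)
    (insert n p.1, p.2 \ p.2.filter (fun s : ℕ => ∃ k < k₀, (s:ℤ) = 2^k + n))

variable (k₀ : ℕ) (hk : 1 ≤ k₀)

lemma greedy_snd_subset : ∀ i, (greedy k₀ hk i).2 ⊆ Finset.Icc 1 (2^k₀)
  | 0 => subset_rfl
  | (i+1) => Finset.sdiff_subset.trans (greedy_snd_subset i)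

lemma greedy_fst_card : ∀ i, (greedy k₀ hk i).1.card ≤ i
  | 0 => le_rfl
  | (i+1) => (Finset.card_insert_le _ _).trans (Nat.succ_le_succ (greedy_fst_card i))

lemma greedy_fst_mem : ∀ i, ∀ n ∈ (greedy k₀ hk i).1, n ∈ Finset.Icc (-(2^k₀):ℤ) (2^k₀) := by
  intro i
  induction i with
  | zero => simp [greedy]
  | succ i ih =>
    intro n hn
    rw [greedy] at hn
    rcases Finset.mem_insert.mp hn with h | h
    · subst h
      exact (Classical.choose_spec (avg k₀ hk ((greedy k₀ hk i).2 ∩ Finset.Icc 1 (2^k₀))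
        Finset.inter_subset_right)).1
    · exact ih n h

lemma greedy_cover : ∀ i, ∀ s ∈ Finset.Icc 1 (2^k₀), s ∉ (greedy k₀ hk i).2 →
    ∃ n ∈ (greedy k₀ hk i).1, ∃ k < k₀, (s:ℤ) = 2^k + n := by
  intro i
  induction i with
  | zero => intro s hs hns; exact absurd hs hns
  | succ i ih =>
    intro s hs hns
    rw [greedy] at hns ⊢
    simp only [Finset.mem_sdiff, not_and, not_not] at hns
    by_cases h : s ∈ (greedy k₀ hk i).2
    · obtain ⟨h1, h2⟩ := Finset.mem_filter.mp (hns h)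
      exact ⟨_, Finset.mem_insert_self _ _, h2⟩
    · obtain ⟨n, hn, hp⟩ := ih s hs h
      exact ⟨n, Finset.mem_insert_of_mem hn, hp⟩

lemma greedy_dec (i : ℕ) :
    ((2*2^k₀+1 : ℝ)) * ((greedy k₀ hk (i+1)).2.card : ℝ) ≤
      ((2*2^k₀+1 : ℝ) - k₀) * ((greedy k₀ hk i).2.card : ℝ) := by
  have hsub := greedy_snd_subset k₀ hk i
  have hint : (greedy k₀ hk i).2 ∩ Finset.Icc 1 (2^k₀) = (greedy k₀ hk i).2 :=
    Finset.inter_eq_left.mpr hsub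
  have hspec := (Classical.choose_spec (avg k₀ hk ((greedy k₀ hk i).2 ∩ Finset.Icc 1 (2^k₀))
    Finset.inter_subset_right)).2
  set n := Classical.choose (avg k₀ hk ((greedy k₀ hk i).2 ∩ Finset.Icc 1 (2^k₀))
    Finset.inter_subset_right) with hn
  rw [hint] at hspec
  have hA1 : (greedy k₀ hk (i+1)).2 =
      (greedy k₀ hk i).2 \ (greedy k₀ hk i).2.filter (fun s : ℕ => ∃ k < k₀, (s:ℤ) = 2^k + n) := by
    rw [greedy]
  have hfsub : (greedy k₀ hk i).2.filter (fun s : ℕ => ∃ k < k₀, (s:ℤ) = 2^k + n) ⊆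
      (greedy k₀ hk i).2 := Finset.filter_subset _ _
  have hcard : (greedy k₀ hk (i+1)).2.card = (greedy k₀ hk i).2.card -
      ((greedy k₀ hk i).2.filter (fun s : ℕ => ∃ k < k₀, (s:ℤ) = 2^k + n)).card := by
    rw [hA1, Finset.card_sdiff_of_subset hfsub]
  have hle := Finset.card_le_card hfsub
  have h1 : ((greedy k₀ hk (i+1)).2.card : ℝ) = ((greedy k₀ hk i).2.card : ℝ) -
      (((greedy k₀ hk i).2.filter (fun s : ℕ => ∃ k < k₀, (s:ℤ) = 2^k + n)).card : ℝ) := by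
    rw [hcard, Nat.cast_sub hle]
  have h2 : (k₀ : ℝ) * ((greedy k₀ hk i).2.card : ℝ) ≤ ((2*2^k₀+1 : ℝ)) *
      (((greedy k₀ hk i).2.filter (fun s : ℕ => ∃ k < k₀, (s:ℤ) = 2^k + n)).card : ℝ) := by
    exact_mod_cast hspec
  rw [h1]
  ring_nf
  ring_nf at h2
  nlinarith [h2]

lemma greedy_bound (i : ℕ) :
    ((greedy k₀ hk i).2.card : ℝ) ≤
      2^k₀ * (((2*2^k₀+1 : ℝ) - k₀) / (2*2^k₀+1)) ^ i := by
  induction i with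
  | zero =>
    simp [greedy, Nat.card_Icc]
  | succ i ih =>
    have hM : (0:ℝ) < 2*2^k₀+1 := by positivity
    have hnum : (0:ℝ) ≤ (2*2^k₀+1 : ℝ) - k₀ := by
      have : (k₀:ℝ) ≤ 2^k₀ := by exact_mod_cast (Nat.lt_two_pow_self (n := k₀)).le
      nlinarith
    have hd := greedy_dec k₀ hk i
    have : ((greedy k₀ hk (i+1)).2.card : ℝ) ≤
        (((2*2^k₀+1 : ℝ) - k₀) / (2*2^k₀+1)) * ((greedy k₀ hk i).2.card : ℝ) := by
      rw [div_mul_eq_mul_div, le_div_iff₀ hM, mul_comm]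
      linarith
    calc ((greedy k₀ hk (i+1)).2.card : ℝ) ≤ _ := this
      _ ≤ (((2*2^k₀+1 : ℝ) - k₀) / (2*2^k₀+1)) * (2^k₀ * (((2*2^k₀+1 : ℝ) - k₀) / (2*2^k₀+1)) ^ i) := by
          apply mul_le_mul_of_nonneg_left ih (by positivity)
      _ = 2^k₀ * (((2*2^k₀+1 : ℝ) - k₀) / (2*2^k₀+1)) ^ (i+1) := by ring

open Classical in
theorem stmt_2 :
    ∃ C : ℝ, 0 < C ∧ ∀ k₀ : ℕ, 1 ≤ k₀ →
      ∃ N : Finset ℤ, (↑N : Set ℤ) ⊆ Set.Icc (-(2 ^ k₀) : ℤ) (2 ^ k₀) ∧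
        (N.card : ℝ) ≤ C * 2 ^ k₀ / k₀ ∧
        (2 : ℝ) ^ k₀ / 2 ≤
          (((Finset.Icc 1 (2 ^ k₀)).filter
            (fun s : ℕ => ∃ n ∈ N, ∃ k < k₀, (s : ℤ) = 2 ^ k + n)).card : ℝ) := by
  refine ⟨4, by norm_num, fun k₀ hk => ?_⟩
  set M : ℝ := 2*2^k₀+1 with hM
  have hMpos : (0:ℝ) < M := by positivity
  have hk₀pos : (0:ℝ) < k₀ := by exact_mod_cast hk
  have hklt : (k₀:ℝ) ≤ 2^k₀ := by exact_mod_cast (Nat.lt_two_pow_self (n := k₀)).le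
  set μ : ℕ := ⌈Real.log 2 * M / k₀⌉₊ with hμ
  refine ⟨(greedy k₀ hk μ).1, ?_, ?_, ?_⟩
  · intro n hn
    exact Set.mem_Icc.mpr (Finset.mem_Icc.mp (greedy_fst_mem k₀ hk μ n (by exact_mod_cast hn)))
  · -- card bound
    have h2 : (μ:ℝ) < Real.log 2 * M / k₀ + 1 :=
      Nat.ceil_lt_add_one (by positivity)
    have hcard : ((greedy k₀ hk μ).1.card : ℝ) ≤ (μ:ℝ) := by
      exact_mod_cast greedy_fst_card k₀ hk μ
    have hlog : Real.log 2 < 0.6931471808 := Real.log_two_lt_d9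
    have hlog0 : 0 < Real.log 2 := Real.log_pos (by norm_num)
    rw [le_div_iff₀ hk₀pos]
    have h3 : Real.log 2 * M / k₀ * k₀ = Real.log 2 * M := by field_simp
    have h4 : ((greedy k₀ hk μ).1.card : ℝ) * k₀ ≤ (Real.log 2 * M / k₀ + 1) * k₀ := by
      nlinarith
    rw [add_mul, h3, one_mul] at h4
    have hpow : (0:ℝ) < 2^k₀ := by positivity
    calc ((greedy k₀ hk μ).1.card : ℝ) * k₀ ≤ Real.log 2 * M + k₀ := h4
      _ ≤ 4 * 2^k₀ := by
          have h1pow : (1:ℝ) ≤ 2^k₀ := by exact_mod_cast Nat.one_le_two_pow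
          have := mul_le_mul_of_nonneg_right hlog.le (by positivity : (0:ℝ) ≤ 2*2^k₀+1)
          rw [hM]; nlinarith
  · -- coverage
    set A := (greedy k₀ hk μ).2 with hA
    have hr0 : (0:ℝ) ≤ (M - k₀)/M := by
      apply div_nonneg _ hMpos.le
      rw [hM]; nlinarith
    have hr1 : (M - k₀)/M = 1 - k₀/M := by field_simp
    have hrexp : (M - k₀)/M ≤ Real.exp (-(k₀/M)) := by
      rw [hr1]
      linarith [Real.add_one_le_exp (-(k₀/M : ℝ))]
    have hμle : Real.log 2 * M / k₀ ≤ (μ:ℝ) := Nat.le_ceil _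
    have hexp : Real.exp (-(k₀/M)) ^ μ ≤ 1/2 := by
      rw [← Real.exp_nat_mul]
      have : Real.log 2 ≤ (μ:ℝ) * (k₀/M) := by
        rw [div_le_iff₀ hk₀pos] at hμle
        calc Real.log 2 = Real.log 2 * M / M := by field_simp
          _ ≤ (μ:ℝ) * k₀ / M := by gcongr
          _ = (μ:ℝ) * (k₀/M) := by ring
      calc Real.exp ((μ:ℕ) * -(k₀/M)) ≤ Real.exp (-Real.log 2) := by
            apply Real.exp_le_exp.mpr; push_cast; nlinarith
        _ = 1/2 := by rw [Real.exp_neg, Real.exp_log (by norm_num)]; norm_num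
    have hpowle : ((M - k₀)/M)^μ ≤ 1/2 :=
      le_trans (pow_le_pow_left₀ hr0 hrexp μ) hexp
    have hAle : (A.card : ℝ) ≤ 2^k₀ / 2 := by
      calc (A.card : ℝ) ≤ 2^k₀ * ((M - k₀)/M)^μ := greedy_bound k₀ hk μ
        _ ≤ 2^k₀ * (1/2) := by
            apply mul_le_mul_of_nonneg_left hpowle (by positivity)
        _ = 2^k₀/2 := by ring
    have hsub : Finset.Icc 1 (2^k₀) \ A ⊆ (Finset.Icc 1 (2^k₀)).filter
        (fun s : ℕ => ∃ n ∈ (greedy k₀ hk μ).1, ∃ k < k₀, (s:ℤ) = 2^k + n) := by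
      intro s hs
      obtain ⟨hs1, hs2⟩ := Finset.mem_sdiff.mp hs
      exact Finset.mem_filter.mpr ⟨hs1, greedy_cover k₀ hk μ s hs1 hs2⟩
    have hAsub := greedy_snd_subset k₀ hk μ
    have hIccCard : (Finset.Icc 1 (2^k₀)).card = 2^k₀ := by
      simp [Nat.card_Icc]
    have hcard1 : (Finset.Icc 1 (2^k₀) \ A).card = 2^k₀ - A.card := by
      rw [Finset.card_sdiff_of_subset hAsub, hIccCard]
    have hAcard_le : A.card ≤ 2^k₀ := hIccCard ▸ Finset.card_le_card hAsub
    have hfin : ((Finset.Icc 1 (2^k₀) \ A).card : ℝ) ≤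
        (((Finset.Icc 1 (2^k₀)).filter
          (fun s : ℕ => ∃ n ∈ (greedy k₀ hk μ).1, ∃ k < k₀, (s:ℤ) = 2^k + n)).card : ℝ) := by
      exact_mod_cast Finset.card_le_card hsub
    have : ((Finset.Icc 1 (2^k₀) \ A).card : ℝ) = 2^k₀ - A.card := by
      rw [hcard1, Nat.cast_sub hAcard_le]; push_cast; ring
    rw [this] at hfin
    linarith
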